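/- arXiv:1309.5589 — 2 statements merged into one kernel-verified Lean document; each statement's English description precedes it below -/
import Mathlib

section
/- Let (X,d) be a metric space and T : X → X a generalized quasi-contraction with constant q ∈ [0,1). Then for every x ∈ X and all natural numbers n, m with 1 ≤ n < m, d(Tⁿx, Tᵐx) ≤ (qⁿ / (1 − q)) · d(x, Tx). In particular, the sequence (Tⁿx)_{n∈ℕ} is a Cauchy sequence in X. -/
open Filter Topology

section QuasiAux

variable {X : Type*} [MetricSpace X]

/-- Diameter of the finite orbit segment `{x, Tx, ..., Tⁿx}`. -/
noncomputable def orbDiam (T : X → X) (x : X) (n : ℕ) : ℝ :=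
  (Finset.range (n+1) ×ˢ Finset.range (n+1)).sup'
    ⟨(0,0), by simp⟩ (fun p => dist (T^[p.1] x) (T^[p.2] x))

lemma dist_le_orbDiam (T : X → X) (x : X) {i j n : ℕ} (hi : i ≤ n) (hj : j ≤ n) :
    dist (T^[i] x) (T^[j] x) ≤ orbDiam T x n :=
  Finset.le_sup' (f := fun p : ℕ × ℕ => dist (T^[p.1] x) (T^[p.2] x))
    (by simp [Finset.mem_product]; omega : (i, j) ∈ _)

lemma orbDiam_nonneg (T : X → X) (x : X) (n : ℕ) : 0 ≤ orbDiam T x n :=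
  le_trans dist_nonneg (dist_le_orbDiam T x (Nat.zero_le n) (Nat.zero_le n))

variable {T : X → X} {q : ℝ} (hq0 : 0 ≤ q)
  (hT : ∀ x y : X, dist (T x) (T y) ≤ q * (max (dist x y) (max (dist x (T x)) (max (dist y (T y)) (max (dist x (T y)) (max (dist y (T x)) (max (dist (T (T x)) x) (max (dist (T (T x)) (T x)) (max (dist (T (T x)) y) (dist (T (T x)) (T y)))))))))))

include hq0 hT

/-- Key step: for `1 ≤ i, j ≤ n` with `i < j`. -/
lemma lemA' (x : X) {i j n : ℕ} (h1i : 1 ≤ i) (hij : i < j) (hj : j ≤ n) :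
    dist (T^[i] x) (T^[j] x) ≤ q * orbDiam T x n := by
  obtain ⟨a, rfl⟩ : ∃ a, i = a + 1 := ⟨i - 1, by omega⟩
  obtain ⟨b, rfl⟩ : ∃ b, j = b + 1 := ⟨j - 1, by omega⟩
  have hx : T^[a+1] x = T (T^[a] x) := Function.iterate_succ_apply' T a x
  have hy : T^[b+1] x = T (T^[b] x) := Function.iterate_succ_apply' T b x
  have hx2 : T (T (T^[a] x)) = T^[a+2] x := by
    show T (T (T^[a] x)) = T^[a+1+1] x
    rw [Function.iterate_succ_apply' T (a+1) x, Function.iterate_succ_apply' T a x]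
  rw [hx, hy]
  refine le_trans (hT (T^[a] x) (T^[b] x)) (mul_le_mul_of_nonneg_left ?_ hq0)
  rw [hx2, ← hx, ← hy]
  have ha : a ≤ n := by omega
  have ha1 : a + 1 ≤ n := by omega
  have ha2 : a + 2 ≤ n := by omega
  have hb : b ≤ n := by omega
  have hb1 : b + 1 ≤ n := by omega
  refine max_le (dist_le_orbDiam T x ha hb) (max_le (dist_le_orbDiam T x ha ha1)
    (max_le (dist_le_orbDiam T x hb hb1) (max_le (dist_le_orbDiam T x ha hb1)
    (max_le (dist_le_orbDiam T x hb ha1) (max_le (dist_le_orbDiam T x ha2 ha)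
    (max_le (dist_le_orbDiam T x ha2 ha1) (max_le (dist_le_orbDiam T x ha2 hb)
    (dist_le_orbDiam T x ha2 hb1))))))))

/-- Key step: any distance between two nontrivial iterates in the orbit segment is
contracted by `q` relative to the diameter. -/
lemma lemA (x : X) {i j n : ℕ} (h1i : 1 ≤ i) (h1j : 1 ≤ j) (hi : i ≤ n) (hj : j ≤ n) :
    dist (T^[i] x) (T^[j] x) ≤ q * orbDiam T x n := by
  rcases lt_trichotomy i j with h | h | h
  · exact lemA' hq0 hT x h1i h hj
  · subst h
    simpa using mul_nonneg hq0 (orbDiam_nonneg T x n)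
  · rw [dist_comm]
    exact lemA' hq0 hT x h1j h hi

lemma lemB (x : X) (n : ℕ) :
    orbDiam T x n ≤ dist x (T x) + q * orbDiam T x n := by
  obtain ⟨p, hp, heq⟩ := Finset.exists_mem_eq_sup'
    (⟨(0,0), by simp⟩ : ((Finset.range (n+1)) ×ˢ (Finset.range (n+1))).Nonempty)
    (fun p : ℕ × ℕ => dist (T^[p.1] x) (T^[p.2] x))
  simp only [Finset.mem_product, Finset.mem_range] at hp
  have hp1 : p.1 ≤ n := by omega
  have hp2 : p.2 ≤ n := by omega
  have qd0 : 0 ≤ q * orbDiam T x n := mul_nonneg hq0 (orbDiam_nonneg T x n)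
  have hd : orbDiam T x n = dist (T^[p.1] x) (T^[p.2] x) := heq
  conv_lhs => rw [hd]
  rcases Nat.eq_zero_or_pos p.1 with h1 | h1
  · rcases Nat.eq_zero_or_pos p.2 with h2 | h2
    · rw [h1, h2]
      simp only [Function.iterate_zero, id_eq, dist_self]
      exact add_nonneg dist_nonneg qd0
    · rw [h1]
      simp only [Function.iterate_zero, id_eq]
      calc dist x (T^[p.2] x) ≤ dist x (T^[1] x) + dist (T^[1] x) (T^[p.2] x) := by
            rw [Function.iterate_one]; exact dist_triangle _ _ _
        _ ≤ dist x (T x) + q * orbDiam T x n := by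
            rw [Function.iterate_one]
            exact add_le_add_right (lemA hq0 hT x le_rfl h2 (by omega) hp2) _
  · rcases Nat.eq_zero_or_pos p.2 with h2 | h2
    · rw [h2]
      simp only [Function.iterate_zero, id_eq]
      rw [dist_comm]
      calc dist x (T^[p.1] x) ≤ dist x (T^[1] x) + dist (T^[1] x) (T^[p.1] x) := by
            rw [Function.iterate_one]; exact dist_triangle _ _ _
        _ ≤ dist x (T x) + q * orbDiam T x n := by
            rw [Function.iterate_one]
            exact add_le_add_right (lemA hq0 hT x le_rfl h1 (by omega) hp1) _
    · exact le_trans (lemA hq0 hT x h1 h2 hp1 hp2) (le_add_of_nonneg_left dist_nonneg)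

lemma orbDiam_le (hq1 : q < 1) (x : X) (n : ℕ) :
    orbDiam T x n ≤ dist x (T x) / (1 - q) := by
  have h1q : 0 < 1 - q := by linarith
  rw [le_div_iff₀ h1q]
  have := lemB hq0 hT x n
  nlinarith [orbDiam_nonneg T x n]

lemma lemC (x : X) (n : ℕ) : orbDiam T (T x) n ≤ q * orbDiam T x (n+1) := by
  apply Finset.sup'_le
  rintro ⟨i, j⟩ hp
  simp only [Finset.mem_product, Finset.mem_range] at hp
  have h1 : T^[i] (T x) = T^[i+1] x := (Function.iterate_succ_apply T i x).symm
  have h2 : T^[j] (T x) = T^[j+1] x := (Function.iterate_succ_apply T j x).symm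
  simp only [h1, h2]
  exact lemA hq0 hT x (by omega) (by omega) (by omega) (by omega)

lemma lemD (x : X) (k n : ℕ) :
    orbDiam T (T^[k] x) n ≤ q ^ k * orbDiam T x (n + k) := by
  induction k generalizing n with
  | zero => simp
  | succ k ih =>
    have h1 : T^[k+1] x = T (T^[k] x) := Function.iterate_succ_apply' T k x
    rw [h1]
    calc orbDiam T (T (T^[k] x)) n ≤ q * orbDiam T (T^[k] x) (n+1) := lemC hq0 hT _ n
      _ ≤ q * (q ^ k * orbDiam T x (n + 1 + k)) :=
          mul_le_mul_of_nonneg_left (ih (n+1)) hq0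
      _ = q ^ (k+1) * orbDiam T x (n + (k+1)) := by ring_nf
      _ ≤ q ^ (k+1) * orbDiam T x (n + (k+1)) := le_rfl

end QuasiAux

/-- For a generalized quasi-contraction, `d(Tⁿx, Tᵐx) ≤ qⁿ/(1-q)·d(x,Tx)`
whenever `1 ≤ n < m`; in particular the Picard iterates form a Cauchy sequence. -/
theorem stmt4 {X : Type*} [MetricSpace X] (T : X → X) (q : ℝ) (hq0 : 0 ≤ q) (hq1 : q < 1)
    (hT : ∀ x y : X, dist (T x) (T y) ≤ q * (max (dist x y) (max (dist x (T x)) (max (dist y (T y)) (max (dist x (T y)) (max (dist y (T x)) (max (dist (T (T x)) x) (max (dist (T (T x)) (T x)) (max (dist (T (T x)) y) (dist (T (T x)) (T y)))))))))))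
    : (∀ (x : X) (n m : ℕ), 1 ≤ n → n < m →
        dist (T^[n] x) (T^[m] x) ≤ q ^ n / (1 - q) * dist x (T x)) ∧
      ∀ x : X, CauchySeq (fun n : ℕ => T^[n] x) := by
  have h1q : 0 < 1 - q := by linarith
  have main : ∀ (x : X) (n m : ℕ), 1 ≤ n → n < m →
      dist (T^[n] x) (T^[m] x) ≤ q ^ n / (1 - q) * dist x (T x) := by
    intro x n m hn hnm
    obtain ⟨a, rfl⟩ : ∃ a, n = a + 1 := ⟨n - 1, by omega⟩
    set y := T^[a] x with hy
    have hn' : T^[a+1] x = T^[1] y := by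
      rw [hy, ← Function.iterate_add_apply, Nat.add_comm]
    have hm' : T^[m] x = T^[m - a] y := by
      rw [hy, ← Function.iterate_add_apply]
      congr 1
      omega
    rw [hn', hm']
    calc dist (T^[1] y) (T^[m - a] y) ≤ q * orbDiam T y (m - a) :=
          lemA hq0 hT y le_rfl (by omega) (by omega) le_rfl
      _ ≤ q * (q ^ a * orbDiam T x (m - a + a)) :=
          mul_le_mul_of_nonneg_left (lemD hq0 hT x a (m - a)) hq0
      _ ≤ q * (q ^ a * (dist x (T x) / (1 - q))) := by
          refine mul_le_mul_of_nonneg_left (mul_le_mul_of_nonneg_left ?_ (pow_nonneg hq0 a)) hq0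
          exact orbDiam_le hq0 hT hq1 x _
      _ = q ^ (a+1) / (1 - q) * dist x (T x) := by ring
  refine ⟨main, fun x => ?_⟩
  apply cauchySeq_of_le_geometric q (dist x (T x) / (1 - q)) hq1
  intro n
  rcases Nat.eq_zero_or_pos n with rfl | hn
  · simp only [zero_add, Function.iterate_zero, Function.iterate_one, pow_zero, mul_one, id_eq]
    rw [le_div_iff₀ h1q]
    nlinarith [dist_nonneg (x := x) (y := T x)]
  · calc dist (T^[n] x) (T^[n+1] x) ≤ q ^ n / (1 - q) * dist x (T x) :=
          main x n (n+1) hn (by omega)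
      _ = dist x (T x) / (1 - q) * q ^ n := by ring
end

section
/- Let (X,d) be a metric space, F : X → BN(X) a multi-valued map which is a generalized quasi-contraction with constant q ∈ (0,1), and let a ∈ (0,1). Suppose T : X → X is a (single-valued) map such that for every x ∈ X, Tx ∈ Fx and d(x, Tx) ≥ q^a · ρ(x, Fx). Then T is a (single-valued) generalized quasi-contraction with constant q^{1−a}, i.e. for all x, y ∈ X, d(Tx,Ty) ≤ q^{1−a} · max{d(x,y), d(x,Tx), d(y,Ty), d(x,Ty), d(y,Tx), d(T²x,x), d(T²x,Tx), d(T²x,y), d(T²x,Ty)}. -/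
open Filter Topology

/-- `setRho A B = sup {dist a b : a ∈ A, b ∈ B}` (denoted ρ in the paper). -/
noncomputable def setRho {X : Type*} [MetricSpace X] (A B : Set X) : ℝ :=
  sSup {r : ℝ | ∃ a ∈ A, ∃ b ∈ B, r = dist a b}

/-- `setD A B = inf {dist a b : a ∈ A, b ∈ B}` (denoted D in the paper). -/
noncomputable def setD {X : Type*} [MetricSpace X] (A B : Set X) : ℝ :=
  sInf {r : ℝ | ∃ a ∈ A, ∃ b ∈ B, r = dist a b}

lemma setD_le' {X : Type*} [MetricSpace X] {A B : Set X} {a b : X}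
    (ha : a ∈ A) (hb : b ∈ B) : setD A B ≤ dist a b := by
  apply csInf_le
  · refine ⟨0, ?_⟩
    rintro r ⟨a', _, b', _, rfl⟩
    exact dist_nonneg
  · exact ⟨a, ha, b, hb, rfl⟩

lemma le_setRho' {X : Type*} [MetricSpace X] {A B : Set X} {a b : X}
    (ha : a ∈ A) (hb : b ∈ B) (hA : Bornology.IsBounded A) (hB : Bornology.IsBounded B) :
    dist a b ≤ setRho A B := by
  apply le_csSup
  · refine ⟨Metric.diam A + dist a b + Metric.diam B, ?_⟩
    rintro r ⟨a', ha', b', hb', rfl⟩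
    calc dist a' b' ≤ dist a' a + dist a b + dist b b' := dist_triangle4 a' a b b'
      _ ≤ Metric.diam A + dist a b + Metric.diam B := by
          gcongr
          · exact Metric.dist_le_diam_of_mem hA ha' ha
          · exact Metric.dist_le_diam_of_mem hB hb hb'
  · exact ⟨a, ha, b, hb, rfl⟩

/-- A selection `T` of a multi-valued generalized quasi-contraction `F`
with `d(x, Tx) ≥ qᵃ · ρ(x, Fx)` is a single-valued generalized quasi-contraction with
constant `q^(1-a)`. -/
theorem stmt14 {X : Type*} [MetricSpace X] (F : X → Set X)
    (hne : ∀ x : X, (F x).Nonempty) (hbd : ∀ x : X, Bornology.IsBounded (F x))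
    (q : ℝ) (hq0 : 0 < q) (hq1 : q < 1) (a : ℝ) (ha0 : 0 < a) (ha1 : a < 1)
    (hF : ∀ x y : X, setRho (F x) (F y) ≤ q * (max (dist x y) (max (setRho {x} (F x)) (max (setRho {y} (F y)) (max (setD {x} (F y)) (max (setD {y} (F x)) (max (setD (⋃ z ∈ F x, F z) {x}) (max (setD (⋃ z ∈ F x, F z) (F x)) (max (setD (⋃ z ∈ F x, F z) {y}) (setD (⋃ z ∈ F x, F z) (F y)))))))))))
    (T : X → X) (hsel : ∀ x : X, T x ∈ F x ∧ q ^ a * setRho {x} (F x) ≤ dist x (T x))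
    : ∀ x y : X, dist (T x) (T y) ≤ q ^ (1 - a) * (max (dist x y) (max (dist x (T x)) (max (dist y (T y)) (max (dist x (T y)) (max (dist y (T x)) (max (dist (T (T x)) x) (max (dist (T (T x)) (T x)) (max (dist (T (T x)) y) (dist (T (T x)) (T y)))))))))) := by
  intro x y
  obtain ⟨hTx, hqx⟩ := hsel x
  obtain ⟨hTy, hqy⟩ := hsel y
  obtain ⟨hTTx, -⟩ := hsel (T x)
  set M := max (dist x y) (max (dist x (T x)) (max (dist y (T y)) (max (dist x (T y))
    (max (dist y (T x)) (max (dist (T (T x)) x) (max (dist (T (T x)) (T x))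
    (max (dist (T (T x)) y) (dist (T (T x)) (T y))))))))) with hM
  have hM0 : (0 : ℝ) ≤ M := le_trans dist_nonneg (le_max_left _ _)
  have hr0 : (0 : ℝ) < q ^ (1 - a) := Real.rpow_pos_of_pos hq0 _
  have hqle : q ≤ q ^ (1 - a) := by
    have := Real.rpow_le_rpow_of_exponent_ge hq0 hq1.le (by linarith : 1 - a ≤ 1)
    simpa using this
  have hpow : q ^ (1 - a) * q ^ a = q := by
    rw [← Real.rpow_add hq0]; norm_num
  -- membership in F²x
  have hmem2 : T (T x) ∈ ⋃ z ∈ F x, F z := Set.mem_biUnion hTx hTTx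
  -- bounds for the nine terms, each of the form q * t ≤ q^(1-a) * M
  have hd1 : dist x y ≤ M := le_max_left _ _
  have hd2 : dist x (T x) ≤ M := le_max_of_le_right (le_max_left _ _)
  have hd3 : dist y (T y) ≤ M := le_max_of_le_right (le_max_of_le_right (le_max_left _ _))
  have hd4 : dist x (T y) ≤ M := le_max_of_le_right (le_max_of_le_right (le_max_of_le_right (le_max_left _ _)))
  have hd5 : dist y (T x) ≤ M := le_max_of_le_right (le_max_of_le_right (le_max_of_le_right (le_max_of_le_right (le_max_left _ _))))
  have hd6 : dist (T (T x)) x ≤ M := le_max_of_le_right (le_max_of_le_right (le_max_of_le_right (le_max_of_le_right (le_max_of_le_right (le_max_left _ _)))))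
  have hd7 : dist (T (T x)) (T x) ≤ M := le_max_of_le_right (le_max_of_le_right (le_max_of_le_right (le_max_of_le_right (le_max_of_le_right (le_max_of_le_right (le_max_left _ _))))))
  have hd8 : dist (T (T x)) y ≤ M := le_max_of_le_right (le_max_of_le_right (le_max_of_le_right (le_max_of_le_right (le_max_of_le_right (le_max_of_le_right (le_max_of_le_right (le_max_left _ _)))))))
  have hd9 : dist (T (T x)) (T y) ≤ M := le_max_of_le_right (le_max_of_le_right (le_max_of_le_right (le_max_of_le_right (le_max_of_le_right (le_max_of_le_right (le_max_of_le_right (le_max_right _ _)))))))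
  -- generic: q * D ≤ q^(1-a) * M when D ≤ d ≤ M
  have gen : ∀ t d' : ℝ, t ≤ d' → 0 ≤ d' → d' ≤ M → q * t ≤ q ^ (1 - a) * M := by
    intro t d' htd hd0 hdM
    calc q * t ≤ q * d' := by nlinarith
      _ ≤ q ^ (1 - a) * M := mul_le_mul hqle hdM hd0 hr0.le
  -- rho terms
  have genrho : ∀ z : X, dist z (T z) ≤ M →
      q * setRho {z} (F z) ≤ q ^ (1 - a) * M := by
    intro z hzM
    have h := (hsel z).2
    calc q * setRho {z} (F z) = q ^ (1 - a) * (q ^ a * setRho {z} (F z)) := by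
          rw [← mul_assoc, hpow]
      _ ≤ q ^ (1 - a) * dist z (T z) := by
          exact mul_le_mul_of_nonneg_left h hr0.le
      _ ≤ q ^ (1 - a) * M := mul_le_mul_of_nonneg_left hzM hr0.le
  have key : dist (T x) (T y) ≤ setRho (F x) (F y) :=
    le_setRho' hTx hTy (hbd x) (hbd y)
  refine key.trans ((hF x y).trans ?_)
  rw [mul_max_of_nonneg _ _ hq0.le, mul_max_of_nonneg _ _ hq0.le,
    mul_max_of_nonneg _ _ hq0.le, mul_max_of_nonneg _ _ hq0.le,
    mul_max_of_nonneg _ _ hq0.le, mul_max_of_nonneg _ _ hq0.le,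
    mul_max_of_nonneg _ _ hq0.le, mul_max_of_nonneg _ _ hq0.le]
  refine max_le (gen _ _ le_rfl dist_nonneg hd1) (max_le (genrho x hd2) (max_le (genrho y hd3)
    (max_le (gen _ _ (setD_le' rfl hTy) dist_nonneg hd4)
    (max_le (gen _ _ (setD_le' rfl hTx) dist_nonneg hd5)
    (max_le (gen _ _ (setD_le' hmem2 rfl) dist_nonneg hd6)
    (max_le (gen _ _ (setD_le' hmem2 hTx) dist_nonneg hd7)
    (max_le (gen _ _ (setD_le' hmem2 rfl) dist_nonneg hd8)
    (gen _ _ (setD_le' hmem2 hTy) dist_nonneg hd9))))))))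
end
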